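/- Let X and Y be positive definite complex n×n matrices, let ℓ ≥ 1, and let N₁, …, N_ℓ be Hermitian complex n×n matrices. If the block matrix [[X, N₁],[N₁, Y]] is positive semidefinite and, for every i ∈ {1, …, ℓ−1}, the block matrix [[X, N_{i+1}],[N_{i+1}, N_i]] is positive semidefinite, then N_i ≤ G_{2^{-i}}(X,Y) for every i ∈ {1, …, ℓ}. -/

import Mathlib

open Matrix Kronecker
open scoped ComplexOrder

noncomputable section

/-- Apply a real function to a complex matrix via the spectral decomposition
(meaningful for Hermitian matrices; defined as `0` otherwise). -/
def matFun {n : Type*} [Fintype n] [DecidableEq n]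
    (f : ℝ → ℝ) (A : Matrix n n ℂ) : Matrix n n ℂ :=
  if hA : A.IsHermitian then
    (hA.eigenvectorUnitary : Matrix n n ℂ) *
      Matrix.diagonal (fun i => (f (hA.eigenvalues i) : ℂ)) *
      (hA.eigenvectorUnitary : Matrix n n ℂ)ᴴ
  else 0

/-- Real power of a matrix (via the spectral decomposition). -/
def mpow {n : Type*} [Fintype n] [DecidableEq n] (A : Matrix n n ℂ) (t : ℝ) :
    Matrix n n ℂ :=
  matFun (fun x => x ^ t) A

/-- Logarithm of a matrix (via the spectral decomposition). -/
def mlog {n : Type*} [Fintype n] [DecidableEq n] (A : Matrix n n ℂ) : Matrix n n ℂ :=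
  matFun Real.log A

/-- The operator relative entropy `D_op(X‖Y) = X^{1/2} log(X^{1/2} Y⁻¹ X^{1/2}) X^{1/2}`. -/
def Dop {n : Type*} [Fintype n] [DecidableEq n] (X Y : Matrix n n ℂ) : Matrix n n ℂ :=
  mpow X (1/2) * mlog (mpow X (1/2) * Y⁻¹ * mpow X (1/2)) * mpow X (1/2)

/-- The Belavkin--Staszewski relative entropy `D̂(ρ‖σ) = Re Tr[D_op(ρ‖σ)]`. -/
def BSEntropy {n : Type*} [Fintype n] [DecidableEq n] (ρ σ : Matrix n n ℂ) : ℝ :=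
  (Dop ρ σ).trace.re

/-- The weighted matrix geometric mean `G_t(X,Y) = X^{1/2} (X^{-1/2} Y X^{-1/2})^t X^{1/2}`. -/
def geoMean {n : Type*} [Fintype n] [DecidableEq n] (t : ℝ) (X Y : Matrix n n ℂ) :
    Matrix n n ℂ :=
  mpow X (1/2) * mpow (mpow X (-(1/2)) * Y * mpow X (-(1/2))) t * mpow X (1/2)

/-- Partial trace over the second (B) factor. -/
def ptraceB {R B : Type*} [Fintype B] (M : Matrix (R × B) (R × B) ℂ) : Matrix R R ℂ :=
  Matrix.of fun r r' => ∑ b, M (r, b) (r', b)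

/-- Partial trace over the first (R) factor. -/
def ptraceR {R A : Type*} [Fintype R] (M : Matrix (R × A) (R × A) ℂ) : Matrix A A ℂ :=
  Matrix.of fun a a' => ∑ r, M (r, a) (r, a')

/-- The map associated to a Choi matrix `J` (indexed by `(A × B) × (A × B)`), applied to a
matrix indexed by `(R × A) × (R × A)`. -/
def choiMap {R A B : Type*} [Fintype A] (J : Matrix (A × B) (A × B) ℂ)
    (X : Matrix (R × A) (R × A) ℂ) : Matrix (R × B) (R × B) ℂ :=
  Matrix.of fun p q => ∑ a, ∑ a', X (p.1, a) (q.1, a') * J (a, p.2) (a', q.2)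


section Aux
set_option linter.unusedSectionVars false
variable {m : Type*} [Fintype m] [DecidableEq m]

lemma contOn_of_finite {s : Set ℝ} (hs : s.Finite) (f : ℝ → ℝ) : ContinuousOn f s := by
  have : Finite s := hs
  have : DiscreteTopology s := inferInstance
  rw [continuousOn_iff_continuous_restrict]
  exact continuous_of_discreteTopology

lemma contOn_spec (f : ℝ → ℝ) (A : Matrix m m ℂ) : ContinuousOn f (spectrum ℝ A) :=
  contOn_of_finite A.finite_real_spectrum f

lemma matFun_eq_cfc {A : Matrix m m ℂ} (hA : A.IsHermitian) (f : ℝ → ℝ) :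
    matFun f A = cfc f A := by
  rw [hA.cfc_eq, Matrix.IsHermitian.cfc, matFun, dif_pos hA]
  rfl

lemma mpow_eq_cfc {A : Matrix m m ℂ} (hA : A.IsHermitian) (t : ℝ) :
    mpow A t = cfc (fun x : ℝ => x ^ t) A :=
  matFun_eq_cfc hA _

lemma Matrix.IsHermitian.sa {A : Matrix m m ℂ} (hA : A.IsHermitian) : _root_.IsSelfAdjoint A := hA

lemma spec_nonneg {A : Matrix m m ℂ} (hA : A.PosSemidef) :
    ∀ x ∈ spectrum ℝ A, 0 ≤ x := by
  intro x hx
  rw [hA.1.spectrum_real_eq_range_eigenvalues] at hx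
  obtain ⟨i, rfl⟩ := hx
  exact hA.eigenvalues_nonneg i

lemma spec_pos {A : Matrix m m ℂ} (hA : A.PosDef) :
    ∀ x ∈ spectrum ℝ A, 0 < x := by
  intro x hx
  rw [hA.1.spectrum_real_eq_range_eigenvalues] at hx
  obtain ⟨i, rfl⟩ := hx
  exact hA.eigenvalues_pos i

lemma cfc_isHermitian {A : Matrix m m ℂ} (f : ℝ → ℝ) :
    (cfc f A).IsHermitian := by
  have : IsSelfAdjoint (cfc f A) := cfc_predicate f A
  exact this

lemma cfc_posSemidef {A : Matrix m m ℂ} (hA : A.IsHermitian) (f : ℝ → ℝ)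
    (hf : ∀ x ∈ spectrum ℝ A, 0 ≤ f x) : (cfc f A).PosSemidef := by
  rw [hA.cfc_eq]
  unfold Matrix.IsHermitian.cfc
  apply Matrix.PosSemidef.mul_mul_conjTranspose_same
  · refine Matrix.posSemidef_diagonal_iff.mpr fun i => ?_
    have := hf _ (hA.eigenvalues_mem_spectrum_real i)
    simpa using (Complex.zero_le_real).2 this

lemma unit_eigenvectorUnitary {A : Matrix m m ℂ} (hA : A.IsHermitian) :
    IsUnit (hA.eigenvectorUnitary : Matrix m m ℂ) :=
  ⟨Unitary.toUnits hA.eigenvectorUnitary, rfl⟩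

lemma posDef_conj_unit {A B : Matrix m m ℂ} (hA : A.PosDef) (hB : IsUnit B) :
    (B * A * Bᴴ).PosDef := by
  refine Matrix.PosDef.of_dotProduct_mulVec_pos ?_ fun x hx => ?_
  · have := hA.1
    unfold Matrix.IsHermitian at *
    simp [Matrix.conjTranspose_mul, Matrix.mul_assoc, this]
  · have hxB : Bᴴ *ᵥ x ≠ 0 := by
      intro h
      apply hx
      have hBH : IsUnit Bᴴ := by
        rw [← Matrix.star_eq_conjTranspose]
        exact hB.star
      have hinj := Matrix.mulVec_injective_iff_isUnit.mpr hBH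
      exact hinj (by simpa using h)
    have := hA.dotProduct_mulVec_pos hxB
    simpa [Matrix.star_mulVec, ← Matrix.mulVec_mulVec, Matrix.dotProduct_mulVec,
      Matrix.mul_assoc] using this

lemma cfc_posDef {A : Matrix m m ℂ} (hA : A.IsHermitian) (f : ℝ → ℝ)
    (hf : ∀ x ∈ spectrum ℝ A, 0 < f x) : (cfc f A).PosDef := by
  rw [hA.cfc_eq]
  unfold Matrix.IsHermitian.cfc
  simp only [Unitary.conjStarAlgAut_apply, Unitary.coe_star, Matrix.star_eq_conjTranspose]
  apply posDef_conj_unit ?_ (unit_eigenvectorUnitary hA)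
  refine Matrix.posDef_diagonal_iff.mpr fun i => ?_
  have := hf _ (hA.eigenvalues_mem_spectrum_real i)
  simpa using (Complex.zero_lt_real).2 this

lemma mpow_isHermitian {A : Matrix m m ℂ} (hA : A.IsHermitian) (t : ℝ) :
    (mpow A t).IsHermitian := by
  rw [mpow_eq_cfc hA]; exact cfc_isHermitian _

lemma mpow_posSemidef {A : Matrix m m ℂ} (hA : A.PosSemidef) (t : ℝ) :
    (mpow A t).PosSemidef := by
  rw [mpow_eq_cfc hA.1]
  exact cfc_posSemidef hA.1 _ fun x hx => Real.rpow_nonneg (spec_nonneg hA x hx) t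

lemma mpow_posDef {A : Matrix m m ℂ} (hA : A.PosDef) (t : ℝ) :
    (mpow A t).PosDef := by
  rw [mpow_eq_cfc hA.1]
  exact cfc_posDef hA.1 _ fun x hx => Real.rpow_pos_of_pos (spec_pos hA x hx) t

lemma mpow_one' {A : Matrix m m ℂ} (hA : A.IsHermitian) : mpow A 1 = A := by
  rw [mpow_eq_cfc hA]
  simpa [Real.rpow_one] using cfc_id' ℝ A hA.sa

lemma mpow_mul_mpow {A : Matrix m m ℂ} (hA : A.PosDef) (s t : ℝ) :
    mpow A s * mpow A t = mpow A (s + t) := by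
  rw [mpow_eq_cfc hA.1, mpow_eq_cfc hA.1, mpow_eq_cfc hA.1,
    ← cfc_mul _ _ A (contOn_spec _ A) (contOn_spec _ A)]
  exact cfc_congr fun x hx => (Real.rpow_add (spec_pos hA x hx) s t).symm

lemma mpow_half_mul_self {A : Matrix m m ℂ} (hA : A.PosSemidef) :
    mpow A (1/2) * mpow A (1/2) = A := by
  rw [mpow_eq_cfc hA.1, ← cfc_mul _ _ A (contOn_spec _ A) (contOn_spec _ A)]
  have : ∀ x ∈ spectrum ℝ A, x ^ (1/2 : ℝ) * x ^ (1/2 : ℝ) = id x := by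
    intro x hx
    rw [← Real.rpow_add' (spec_nonneg hA x hx) (by norm_num)]
    norm_num
  rw [cfc_congr this, cfc_id ℝ A hA.1.sa]

lemma mpow_neg_mul_mpow {A : Matrix m m ℂ} (hA : A.PosDef) :
    mpow A (-(1/2)) * mpow A (1/2) = 1 ∧ mpow A (1/2) * mpow A (-(1/2)) = 1 := by
  constructor <;>
  · rw [mpow_mul_mpow hA]
    norm_num
    rw [show (0:ℝ) = (0:ℝ) from rfl, mpow_eq_cfc hA.1]
    have : ∀ x ∈ spectrum ℝ A, x ^ (0:ℝ) = (1 : ℝ → ℝ) x := fun x _ => Real.rpow_zero x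
    rw [cfc_congr this, cfc_one ℝ A hA.1.sa]

lemma mpow_neg_one_inv {A : Matrix m m ℂ} (hA : A.PosDef) :
    A⁻¹ = mpow A (-1) := by
  apply Matrix.inv_eq_left_inv
  have := mpow_mul_mpow hA (-1) 1
  rw [mpow_one' hA.1] at this
  rw [this]
  norm_num
  rw [mpow_eq_cfc hA.1]
  have : ∀ x ∈ spectrum ℝ A, x ^ (0:ℝ) = (1 : ℝ → ℝ) x := fun x _ => Real.rpow_zero x
  rw [cfc_congr this, cfc_one ℝ A hA.1.sa]

lemma psd_conj_sub {A B : Matrix m m ℂ} (h : (B - A).PosSemidef) (C : Matrix m m ℂ) :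
    (C * B * Cᴴ - C * A * Cᴴ).PosSemidef := by
  have := h.mul_mul_conjTranspose_same C
  simpa [Matrix.mul_sub, Matrix.sub_mul] using this

lemma psd_sub_trans {A B C : Matrix m m ℂ} (h1 : (B - A).PosSemidef)
    (h2 : (C - B).PosSemidef) : (C - A).PosSemidef := by
  have := h2.add h1
  simpa using this

lemma sub_psd_of_sq {C D : Matrix m m ℂ} (hC : C.PosSemidef) (hD : D.PosSemidef)
    (h : (D * D - C * C).PosSemidef) : (D - C).PosSemidef := by
  have hT : (D - C).IsHermitian := hD.1.sub hC.1
  apply hT.posSemidef_iff_eigenvalues_nonneg.mpr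
  intro i
  by_contra hneg
  push_neg at hneg
  rw [Pi.zero_apply] at hneg
  set lam := hT.eigenvalues i with hlam
  set v : m → ℂ := ⇑(hT.eigenvectorBasis i) with hv
  have hvec : (D - C) *ᵥ v = (lam : ℂ) • v := by
    have h1 := hT.mulVec_eigenvectorBasis i
    have h2 : (lam : ℂ) • v = lam • v := by
      ext x; simp [Complex.real_smul]
    rw [h2]; exact h1
  have hvne : v ≠ 0 := by
    have hnz := hT.eigenvectorBasis.orthonormal.ne_zero i
    intro h0
    apply hnz
    ext x
    exact congrFun h0 x
  have h0 := h.dotProduct_mulVec_nonneg v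
  have hD2 : star v ⬝ᵥ ((D * D - C * C) *ᵥ v)
      = (lam : ℂ) * (star v ⬝ᵥ (D *ᵥ v)) + (lam : ℂ) * (star v ⬝ᵥ (C *ᵥ v)) := by
    have hsplit : D * D - C * C = D * (D - C) + (D - C) * C := by
      rw [Matrix.mul_sub, Matrix.sub_mul]; abel
    rw [hsplit, Matrix.add_mulVec, dotProduct_add]
    congr 1
    · rw [← Matrix.mulVec_mulVec, hvec, Matrix.mulVec_smul, dotProduct_smul]
      simp [smul_eq_mul]
    · rw [← Matrix.mulVec_mulVec, Matrix.dotProduct_mulVec (star v) (D - C)]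
      have hvm : star v ᵥ* (D - C) = (lam : ℂ) • star v := by
        have : star v ᵥ* (D - C) = star ((D - C) *ᵥ v) := by
          rw [Matrix.star_mulVec, hT.eq]
        rw [this, hvec, star_smul]
        simp [Complex.conj_ofReal]
      rw [hvm, smul_dotProduct]
      simp [smul_eq_mul]
  rw [hD2] at h0
  have hcd := hC.dotProduct_mulVec_nonneg v
  have hdd := hD.dotProduct_mulVec_nonneg v
  set cd := star v ⬝ᵥ (C *ᵥ v) with hcddef
  set dd := star v ⬝ᵥ (D *ᵥ v) with hdddef
  rw [Complex.nonneg_iff] at h0 hcd hdd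
  have hre : 0 ≤ lam * (dd.re + cd.re) := by
    have := h0.1
    simpa [Complex.add_re, Complex.mul_re, Complex.ofReal_re, Complex.ofReal_im,
      ← hcd.2, ← hdd.2, mul_add] using this
  have hsum : dd.re + cd.re ≤ 0 := by nlinarith
  have hcre : cd.re = 0 := by linarith [hcd.1, hdd.1]
  have hdre : dd.re = 0 := by linarith [hcd.1, hdd.1]
  have hc0 : C *ᵥ v = 0 := (hC.dotProduct_mulVec_zero_iff v).mp
    (by rw [← hcddef]; exact Complex.ext hcre hcd.2.symm)
  have hd0 : D *ᵥ v = 0 := (hD.dotProduct_mulVec_zero_iff v).mp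
    (by rw [← hdddef]; exact Complex.ext hdre hdd.2.symm)
  have : (lam : ℂ) • v = 0 := by
    rw [← hvec, Matrix.sub_mulVec, hc0, hd0, sub_zero]
  rcases smul_eq_zero.mp this with h | h
  · exact absurd (by exact_mod_cast h : lam = 0) (by linarith)
  · exact hvne h

lemma contOn_image (f g : ℝ → ℝ) (A : Matrix m m ℂ) : ContinuousOn g (f '' spectrum ℝ A) :=
  contOn_of_finite ((Matrix.finite_real_spectrum (A := A)).image f) g

lemma sqrt_mono {A B : Matrix m m ℂ} (hA : A.PosSemidef) (hB : B.PosSemidef)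
    (h : (B - A).PosSemidef) : (mpow B (1/2) - mpow A (1/2)).PosSemidef := by
  apply sub_psd_of_sq (mpow_posSemidef hA _) (mpow_posSemidef hB _)
  rw [mpow_half_mul_self hA, mpow_half_mul_self hB]
  exact h

lemma self_le_abs {M : Matrix m m ℂ} (hM : M.IsHermitian) :
    (mpow (M * M) (1/2) - M).PosSemidef := by
  have hMM : M * M = cfc (fun x : ℝ => x * x) M := by
    conv_lhs => rw [← cfc_id' ℝ M hM.sa]
    rw [← cfc_mul _ _ M (contOn_spec _ M) (contOn_spec _ M)]
  have hsq : (M * M).IsHermitian := by rw [hMM]; exact cfc_isHermitian _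
  have key : mpow (M * M) (1/2) = cfc (fun x : ℝ => |x|) M := by
    rw [mpow_eq_cfc hsq, hMM,
      ← cfc_comp' (fun x : ℝ => x ^ (1/2 : ℝ)) (fun x : ℝ => x * x) M
        (contOn_image _ _ M) (contOn_spec _ M) hM.sa]
    apply cfc_congr
    intro x _
    show (x * x) ^ (1/2 : ℝ) = |x|
    rw [← Real.sqrt_eq_rpow, Real.sqrt_mul_self_eq_abs]
  have hsub : cfc (fun x : ℝ => |x| - x) M = cfc (fun x : ℝ => |x|) M - M := by
    rw [cfc_sub _ _ M (contOn_spec _ M) (contOn_spec _ M), cfc_id' ℝ M hM.sa]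
  rw [key, ← hsub]
  exact cfc_posSemidef hM _ fun x _ => by simp [abs_nonneg, neg_abs_le, sub_nonneg, le_abs_self]

lemma mpow_mpow {A : Matrix m m ℂ} (hA : A.PosDef) (s t : ℝ) :
    mpow (mpow A s) t = mpow A (s * t) := by
  have hs := mpow_posDef hA s
  rw [mpow_eq_cfc hs.1, mpow_eq_cfc hA.1, mpow_eq_cfc hA.1,
    ← cfc_comp' (fun x : ℝ => x ^ t) (fun x : ℝ => x ^ s) A
      (contOn_image _ _ A) (contOn_spec _ A) hA.1.sa]
  apply cfc_congr
  intro x hx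
  show (x ^ s) ^ t = x ^ (s * t)
  rw [← Real.rpow_mul (le_of_lt (spec_pos hA x hx))]

lemma inner_posDef {X Y : Matrix m m ℂ} (hX : X.PosDef) (hY : Y.PosDef) :
    (mpow X (-(1/2)) * Y * mpow X (-(1/2))).PosDef := by
  have hRd := mpow_posDef hX (-(1/2))
  have := posDef_conj_unit hY hRd.isUnit
  rwa [hRd.1] at this

lemma geoMean_posDef {X Y : Matrix m m ℂ} (hX : X.PosDef) (hY : Y.PosDef) (t : ℝ) :
    (geoMean t X Y).PosDef := by
  have hPd := mpow_posDef hX (1/2)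
  have hT := inner_posDef hX hY
  have := posDef_conj_unit (mpow_posDef hT t) hPd.isUnit
  rwa [hPd.1] at this

lemma block_psd_schur {X W A : Matrix m m ℂ} (hX : X.PosDef) (hA : A.IsHermitian)
    (h : (Matrix.fromBlocks X A A W).PosSemidef) : (W - A * X⁻¹ * A).PosSemidef := by
  haveI := hX.isUnit.invertible
  have h' : (Matrix.fromBlocks X A Aᴴ W).PosSemidef := by rwa [hA.eq]
  have := (Matrix.PosDef.fromBlocks₁₁ A W hX).mp h'
  rwa [hA.eq] at this

lemma block_psd_corner {X W A : Matrix m m ℂ} (hX : X.PosDef) (hA : A.IsHermitian)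
    (h : (Matrix.fromBlocks X A A W).PosSemidef) : W.PosSemidef := by
  have hs := block_psd_schur hX hA h
  have hconj : (A * X⁻¹ * A).PosSemidef := by
    have := hX.inv.posSemidef.mul_mul_conjTranspose_same A
    rwa [hA.eq] at this
  have := hs.add hconj
  simpa using this

lemma key_half {X W N : Matrix m m ℂ} (hX : X.PosDef) (hW : W.PosSemidef)
    (hN : N.IsHermitian) (h : (Matrix.fromBlocks X N N W).PosSemidef) :
    (geoMean (1/2) X W - N).PosSemidef := by
  set P := mpow X (1/2) with hPdef
  set R := mpow X (-(1/2)) with hRdef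
  have hPd := mpow_posDef hX (1/2)
  have hRd := mpow_posDef hX (-(1/2))
  have hRP : R * P = 1 := (mpow_neg_mul_mpow hX).1
  have hPR : P * R = 1 := (mpow_neg_mul_mpow hX).2
  have hSchur := block_psd_schur hX hN h
  have hXinv : X⁻¹ = R * R := by
    rw [mpow_neg_one_inv hX, hRdef, mpow_mul_mpow hX]
    norm_num
  have hMH : (R * N * R).IsHermitian := by
    have : (R * N * R)ᴴ = R * N * R := by
      simp only [Matrix.conjTranspose_mul, hRdef, hRd.1.eq, hN.eq, Matrix.mul_assoc]
    exact this
  have hSpsd : (R * W * R).PosSemidef := by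
    have := hW.mul_mul_conjTranspose_same R
    rwa [hRd.1] at this
  have hMM : (R * N * R) * (R * N * R) = R * (N * X⁻¹ * N) * R := by
    rw [hXinv]
    simp only [Matrix.mul_assoc]
  have hdiff : (R * W * R - (R * N * R) * (R * N * R)).PosSemidef := by
    rw [hMM]
    have := psd_conj_sub hSchur R
    rwa [hRd.1] at this
  have hM2psd : ((R * N * R) * (R * N * R)).PosSemidef := by
    have := Matrix.posSemidef_conjTranspose_mul_self (R * N * R)
    rwa [hMH.eq] at this
  have h1 : (mpow ((R * N * R) * (R * N * R)) (1/2) - R * N * R).PosSemidef :=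
    self_le_abs hMH
  have h2 := sqrt_mono hM2psd hSpsd hdiff
  have h3 := psd_sub_trans h1 h2
  have h4 := psd_conj_sub h3 P
  rw [hPd.1] at h4
  have hPMP : P * (R * N * R) * P = N := by
    have e : P * (R * N * R) * P = (P * R) * N * (R * P) := by
      simp only [Matrix.mul_assoc]
    rw [e, hPR, hRP, Matrix.one_mul, Matrix.mul_one]
  rw [hPMP] at h4
  exact h4

lemma geoHalf_mono {X W₁ W₂ : Matrix m m ℂ} (hX : X.PosDef) (h1 : W₁.PosSemidef)
    (h2 : W₂.PosSemidef) (h : (W₂ - W₁).PosSemidef) :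
    (geoMean (1/2) X W₂ - geoMean (1/2) X W₁).PosSemidef := by
  set P := mpow X (1/2) with hPdef
  set R := mpow X (-(1/2)) with hRdef
  have hPd := mpow_posDef hX (1/2)
  have hRd := mpow_posDef hX (-(1/2))
  have hS1 : (R * W₁ * R).PosSemidef := by
    have := h1.mul_mul_conjTranspose_same R; rwa [hRd.1] at this
  have hS2 : (R * W₂ * R).PosSemidef := by
    have := h2.mul_mul_conjTranspose_same R; rwa [hRd.1] at this
  have hdiff : (R * W₂ * R - R * W₁ * R).PosSemidef := by
    have := psd_conj_sub h R; rwa [hRd.1] at this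
  have hs := sqrt_mono hS1 hS2 hdiff
  have h4 := psd_conj_sub hs P
  rwa [hPd.1] at h4

lemma geoHalf_geo {X Y : Matrix m m ℂ} (hX : X.PosDef) (hY : Y.PosDef) (t : ℝ) :
    geoMean (1/2) X (geoMean t X Y) = geoMean (t/2) X Y := by
  set P := mpow X (1/2) with hPdef
  set R := mpow X (-(1/2)) with hRdef
  have hRP : R * P = 1 := (mpow_neg_mul_mpow hX).1
  have hPR : P * R = 1 := (mpow_neg_mul_mpow hX).2
  have hT : (R * Y * R).PosDef := inner_posDef hX hY
  have hmid : R * (geoMean t X Y) * R = mpow (R * Y * R) t := by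
    have e1 : geoMean t X Y = P * mpow (R * Y * R) t * P := rfl
    have e2 : R * (P * mpow (R * Y * R) t * P) * R
        = (R * P) * mpow (R * Y * R) t * (P * R) := by
      simp only [Matrix.mul_assoc]
    rw [e1, e2, hRP, hPR, Matrix.one_mul, Matrix.mul_one]
  have e3 : geoMean (1/2) X (geoMean t X Y)
      = P * mpow (R * (geoMean t X Y) * R) (1/2) * P := rfl
  rw [e3, hmid, mpow_mpow hT t (1/2), show t * (1/2) = t/2 by ring]
  rfl

end Aux

/-- the chain of semidefinite constraints
`[[X, N₁],[N₁, Y]] ⪰ 0` and `[[X, N_{i+1}],[N_{i+1}, N_i]] ⪰ 0` for `1 ≤ i ≤ ℓ−1`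
implies `N_i ≤ G_{2^{-i}}(X,Y)` for all `1 ≤ i ≤ ℓ`. -/
theorem geoMean_sdp_chain {n ℓ : ℕ} (hℓ : 1 ≤ ℓ)
    (X Y : Matrix (Fin n) (Fin n) ℂ) (hX : X.PosDef) (hY : Y.PosDef)
    (N : ℕ → Matrix (Fin n) (Fin n) ℂ)
    (hHerm : ∀ i, 1 ≤ i → i ≤ ℓ → (N i).IsHermitian)
    (h1 : (Matrix.fromBlocks X (N 1) (N 1) Y).PosSemidef)
    (hstep : ∀ i, 1 ≤ i → i + 1 ≤ ℓ →
      (Matrix.fromBlocks X (N (i + 1)) (N (i + 1)) (N i)).PosSemidef) :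
    ∀ i, 1 ≤ i → i ≤ ℓ → (geoMean ((2 : ℝ) ^ (-(i : ℤ))) X Y - N i).PosSemidef := by
  intro i
  induction i with
  | zero => intro h; omega
  | succ i ih =>
    intro _ hil
    rcases Nat.eq_zero_or_pos i with rfl | hi
    · -- base case : i + 1 = 1
      have hb := key_half hX hY.posSemidef (hHerm 1 le_rfl hℓ) h1
      have he : ((2 : ℝ) ^ (-((0 + 1 : ℕ) : ℤ))) = (1/2 : ℝ) := by norm_num
      rw [he]
      exact hb
    · -- inductive step
      have hi1 : 1 ≤ i := hi
      have hil' : i + 1 ≤ ℓ := hil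
      have hstep' := hstep i hi1 hil'
      have hNsuccH : (N (i + 1)).IsHermitian := hHerm (i + 1) (by omega) hil'
      have hNiH : (N i).IsHermitian := hHerm i hi1 (by omega)
      have hNipsd : (N i).PosSemidef := block_psd_corner hX hNsuccH hstep'
      have ih' := ih hi1 (by omega)
      have gpd := geoMean_posDef hX hY ((2 : ℝ) ^ (-(i : ℤ)))
      have k1 := key_half hX hNipsd hNsuccH hstep'
      have k2 := geoHalf_mono hX hNipsd gpd.posSemidef ih'
      have k3 := psd_sub_trans k1 k2
      rw [geoHalf_geo hX hY] at k3
      have he : ((2 : ℝ) ^ (-(i : ℤ))) / 2 = (2 : ℝ) ^ (-((i + 1 : ℕ) : ℤ)) := by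
        have h2 : (-((i + 1 : ℕ) : ℤ)) = -(i : ℤ) + (-1) := by push_cast; ring
        rw [h2, zpow_add₀ (by norm_num : (2:ℝ) ≠ 0)]
        norm_num
        ring
      rw [he] at k3
      exact k3
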